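/- Let g be a symmetric bilinear form on ℝ^m for which there exists a vector x₀ with g(x₀,x₀) > 0. Let ν ≥ 1 and let p : ℝ^m → ℝ be the evaluation of a polynomial in m variables that is homogeneous of degree 2ν. If there is a constant ρ such that p(x) = ρ for every x with g(x,x) = 1, then p(x) = ρ · g(x,x)^ν for every x ∈ ℝ^m. (The polynomial-identity step in the proof of Theorem 2.1.) -/

import Mathlib

open MvPolynomial Polynomial

lemma eval_smul_homog {m n : ℕ} {P : MvPolynomial (Fin m) ℝ} (hP : P.IsHomogeneous n)
    (t : ℝ) (x : Fin m → ℝ) : MvPolynomial.eval (t • x) P = t ^ n * MvPolynomial.eval x P := by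
  rw [eval_eq, eval_eq, Finset.mul_sum]
  refine Finset.sum_congr rfl fun d hd => ?_
  have hdeg : (Finsupp.weight (1 : Fin m → ℕ)) d = n := hP (mem_support_iff.mp hd)
  have : ∏ i ∈ d.support, (t • x) i ^ d i
      = (∏ i ∈ d.support, t ^ d i) * ∏ i ∈ d.support, x i ^ d i := by
    rw [← Finset.prod_mul_distrib]
    exact Finset.prod_congr rfl fun i _ => by simp [mul_pow]
  rw [this, Finset.prod_pow_eq_pow_sum]
  have hsum : ∑ i ∈ d.support, d i = n := by
    rw [← hdeg]; simp [Finsupp.weight_apply, Finsupp.sum]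
  rw [hsum]; ring

/-- The polynomial-identity step in the proof of Theorem 2.1: a homogeneous
polynomial function of degree 2ν that is constant on the unit spacelike
pseudo-sphere of a symmetric bilinear form admitting a spacelike vector
equals ρ·g(x,x)^ν everywhere. -/
theorem homogeneous_constant_on_unit_sphere
    (m : ℕ) (g : LinearMap.BilinForm ℝ (Fin m → ℝ))
    (hgsym : ∀ x y, g x y = g y x)
    (x₀ : Fin m → ℝ) (hx₀ : 0 < g x₀ x₀)
    (ν : ℕ) (hν : 1 ≤ ν)
    (P : MvPolynomial (Fin m) ℝ) (hP : P.IsHomogeneous (2 * ν))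
    (ρ : ℝ) (hconst : ∀ x : Fin m → ℝ, g x x = 1 → MvPolynomial.eval x P = ρ) :
    ∀ x : Fin m → ℝ, MvPolynomial.eval x P = ρ * (g x x) ^ ν := by
  -- Step 1: the identity on the positive cone.
  have cone : ∀ y : Fin m → ℝ, 0 < g y y → MvPolynomial.eval y P = ρ * (g y y) ^ ν := by
    intro y hy
    set c := g y y with hc
    set s := (Real.sqrt c)⁻¹ with hs
    have hsq : s ^ 2 = c⁻¹ := by
      rw [hs, inv_pow, Real.sq_sqrt hy.le]
    have hgs : g (s • y) (s • y) = 1 := by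
      have : g (s • y) (s • y) = s ^ 2 * c := by
        simp [map_smul, smul_eq_mul, sq]; ring
      rw [this, hsq, inv_mul_cancel₀ hy.ne']
    have h1 : MvPolynomial.eval (s • y) P = ρ := hconst _ hgs
    rw [eval_smul_homog hP] at h1
    have hpow : s ^ (2 * ν) = (c ^ ν)⁻¹ := by
      rw [pow_mul, hsq, inv_pow]
    rw [hpow] at h1
    have hcν : (c : ℝ) ^ ν ≠ 0 := pow_ne_zero _ hy.ne'
    field_simp at h1
    linarith [h1]
  -- Step 2: extend along lines toward x₀ by a one-variable polynomial argument.
  intro x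
  set a := g x₀ x₀ with ha
  set b := g x x₀ with hb
  set c := g x x with hc
  -- the affine substitution X i ↦ x i + x₀ i * T
  set φ : Fin m → ℝ[X] := fun i => Polynomial.C (x i) + Polynomial.C (x₀ i) * Polynomial.X with hφ
  set Q : ℝ[X] := Polynomial.C c + Polynomial.C (2 * b) * Polynomial.X
      + Polynomial.C a * Polynomial.X ^ 2 with hQ
  set R : ℝ[X] := MvPolynomial.aeval φ P - Polynomial.C ρ * Q ^ ν with hR
  have line : ∀ t : ℝ, Polynomial.eval t (MvPolynomial.aeval φ P)
      = MvPolynomial.eval (x + t • x₀) P := by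
    intro t
    have h := MvPolynomial.comp_aeval_apply (f := φ) (Polynomial.aeval t) P
    simp only [Polynomial.coe_aeval_eq_eval] at h
    have hfun : (fun i => Polynomial.eval t (φ i)) = x + t • x₀ := by
      funext i
      simp only [hφ, Pi.add_apply, Pi.smul_apply, smul_eq_mul, Polynomial.eval_add,
        Polynomial.eval_mul, Polynomial.eval_C, Polynomial.eval_X]
      ring
    rw [hfun] at h
    rw [h, MvPolynomial.aeval_def, Algebra.algebraMap_self]
    rfl
  have gline : ∀ t : ℝ, g (x + t • x₀) (x + t • x₀) = Polynomial.eval t Q := by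
    intro t
    simp only [map_add, map_smul, LinearMap.add_apply, LinearMap.smul_apply, smul_eq_mul, hQ,
      Polynomial.eval_add, Polynomial.eval_mul, Polynomial.eval_C, Polynomial.eval_X,
      Polynomial.eval_pow]
    rw [← ha, ← hb, ← hc, hgsym x₀ x]
    ring
  have hRroot : ∀ t : ℝ, max 1 ((|2 * b| + |c| + 1) / a) < t → Polynomial.eval t R = 0 := by
    intro t ht
    have ht1 : (1 : ℝ) < t := lt_of_le_of_lt (le_max_left _ _) ht
    have ht2 : (|2 * b| + |c| + 1) / a < t := lt_of_le_of_lt (le_max_right _ _) ht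
    have hpos : 0 < Polynomial.eval t Q := by
      have h2 : |2 * b| + |c| + 1 < a * t := by
        rw [div_lt_iff₀ hx₀] at ht2; linarith [ht2]
      have h3 : a * t < a * t ^ 2 := by
        have := mul_lt_mul_of_pos_left (by nlinarith : t < t ^ 2) hx₀
        linarith
      have hb1 : -(2 * b) * t ≤ |2 * b| * t := by
        nlinarith [neg_abs_le (2 * b), abs_nonneg (2 * b)]
      have : |2 * b| * t ≤ |2*b| * t := le_refl _
      simp only [hQ, Polynomial.eval_add, Polynomial.eval_mul, Polynomial.eval_C,
        Polynomial.eval_X, Polynomial.eval_pow]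
      nlinarith [neg_abs_le c, abs_nonneg (2 * b), abs_nonneg c, h2, h3, hb1, ht1]
    have := cone (x + t • x₀) (by rw [gline t]; exact hpos)
    simp only [hR, Polynomial.eval_sub, Polynomial.eval_mul, Polynomial.eval_C,
      Polynomial.eval_pow, line t, this, gline t]
    ring
  have hR0 : R = 0 := by
    apply Polynomial.eq_zero_of_infinite_isRoot
    apply Set.Infinite.mono (s := Set.Ioi (max 1 ((|2 * b| + |c| + 1) / a)))
    · intro t ht; exact hRroot t ht
    · exact Set.Ioi_infinite _
  have heq := congrArg (Polynomial.eval 0) hR0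
  simp only [hR, Polynomial.eval_sub, Polynomial.eval_mul, Polynomial.eval_C,
    Polynomial.eval_pow, Polynomial.eval_zero, line 0, sub_eq_zero] at heq
  simp only [zero_smul, add_zero] at heq
  rw [heq]
  simp [hQ]
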